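/- Let Ω ⊆ ℝ^d be open, let Z₁,…,Z_m : closure(Ω) → ℝ^d be locally Lipschitz vector fields, and let K ≠ ∅ be a relatively closed subset of Ω. If for every x ∈ K* ∩ Ω and every generalized exterior normal ν to K at x one has Z_i(x)·ν = 0 for all i = 1,…,m, then K is invariant for the control system (S): for every x ∈ K, every admissible control β and every τ > 0 such that the solution y_x(·,β) exists on [0,τ), one has y_x(t,β) ∈ K for all t ∈ [0,τ). -/

import Mathlib

open Set Metric Filter Topology

noncomputable section

/-- Euclidean space `ℝ^d`. -/
abbrev EV (d : ℕ) := EuclideanSpace ℝ (Fin d)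

/-- The outer product `p ⊗ p` as a `d × d` matrix. -/
def outer {d : ℕ} (p : EV d) : Matrix (Fin d) (Fin d) ℝ := Matrix.of fun i j => p i * p j

/-- Euclidean dot product. -/
def dotp {d : ℕ} (p q : EV d) : ℝ := ∑ i, p i * q i

/-- Euclidean gradient. -/
def grad {d : ℕ} (φ : EV d → ℝ) (x : EV d) : EV d :=
  (EuclideanSpace.equiv (Fin d) ℝ).symm fun i => fderiv ℝ φ x (EuclideanSpace.single i 1)

/-- Euclidean Hessian matrix. -/
def hess {d : ℕ} (φ : EV d → ℝ) (x : EV d) : Matrix (Fin d) (Fin d) ℝ :=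
  Matrix.of fun i j =>
    fderiv ℝ (fun y => fderiv ℝ φ y (EuclideanSpace.single j 1)) x (EuclideanSpace.single i 1)

/-- `F` is proper: nondecreasing in `r`, nonincreasing in the matrix argument
(w.r.t. the positive semidefinite order `Y ≤ X ↔ (X - Y).PosSemidef`). -/
def IsProper {d m : ℕ} (Ω : Set (EV d))
    (F : EV d → ℝ → EV m → Matrix (Fin m) (Fin m) ℝ → ℝ) : Prop :=
  ∀ x ∈ Ω, ∀ r s : ℝ, ∀ p : EV m, ∀ X Y : Matrix (Fin m) (Fin m) ℝ,
    r ≤ s → (X - Y).PosSemidef → F x r p X ≤ F x s p Y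

/-- Lower semicontinuity of the operator `F`, jointly in all its arguments. -/
def IsLscOperator {d m : ℕ} (Ω : Set (EV d))
    (F : EV d → ℝ → EV m → Matrix (Fin m) (Fin m) ℝ → ℝ) : Prop :=
  LowerSemicontinuousOn
    (fun q : EV d × ℝ × EV m × Matrix (Fin m) (Fin m) ℝ => F q.1 q.2.1 q.2.2.1 q.2.2.2)
    {q | q.1 ∈ Ω ∧ q.2.2.1 ≠ 0 ∧ q.2.2.2.IsSymm}

/-- Condition (ii) (scaling): for some `φ : (0,1] → (0,∞)`,
`F(x, ξs, ξp, ξX) ≥ φ(ξ) F(x,s,p,X)` for all `ξ ∈ (0,1]`, `s ∈ [-1,0]`. -/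
def HasScaling {d m : ℕ} (Ω : Set (EV d))
    (F : EV d → ℝ → EV m → Matrix (Fin m) (Fin m) ℝ → ℝ) : Prop :=
  ∃ φ : ℝ → ℝ, (∀ ξ ∈ Ioc (0:ℝ) 1, 0 < φ ξ) ∧
    ∀ ξ ∈ Ioc (0:ℝ) 1, ∀ s ∈ Icc (-1:ℝ) 0, ∀ x ∈ Ω, ∀ p : EV m, p ≠ 0 →
      ∀ X : Matrix (Fin m) (Fin m) ℝ, X.IsSymm →
        φ ξ * F x s p X ≤ F x (ξ * s) (ξ • p) (ξ • X)

/-- Ellipticity condition (elli) for a subelliptic operator `G`. -/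
def IsElliptic {d m : ℕ} (Ω : Set (EV d))
    (G : EV d → ℝ → EV m → Matrix (Fin m) (Fin m) ℝ → ℝ) : Prop :=
  ∀ x ∈ Ω, ∀ q : EV m, q ≠ 0 → ∀ X : Matrix (Fin m) (Fin m) ℝ, X.IsSymm →
    ∃ γ : ℝ, 0 < γ ∧ 0 < G x 0 q (X - γ • outer q)

/-- `Z` is a generalized subunit vector for `F` at `x`:
`sup_{γ>0} F(x,0,p, I - γ p⊗p) > 0` whenever `Z·p ≠ 0`. -/
def IsSubunitAt {d : ℕ} (F : EV d → ℝ → EV d → Matrix (Fin d) (Fin d) ℝ → ℝ)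
    (x : EV d) (Z : EV d) : Prop :=
  ∀ p : EV d, dotp Z p ≠ 0 → ∃ γ : ℝ, 0 < γ ∧ 0 < F x 0 p (1 - γ • outer p)

/-- Viscosity subsolution (test functions with nonvanishing gradient). -/
def IsViscSubsol {d : ℕ} (Ω : Set (EV d))
    (F : EV d → ℝ → EV d → Matrix (Fin d) (Fin d) ℝ → ℝ) (u : EV d → ℝ) : Prop :=
  ∀ φ : EV d → ℝ, ContDiff ℝ 2 φ → ∀ x ∈ Ω,
    IsLocalMaxOn (fun y => u y - φ y) Ω x → grad φ x ≠ 0 →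
      F x (u x) (grad φ x) (hess φ x) ≤ 0

/-- Viscosity supersolution (test functions with nonvanishing gradient). -/
def IsViscSupersol {d : ℕ} (Ω : Set (EV d))
    (F : EV d → ℝ → EV d → Matrix (Fin d) (Fin d) ℝ → ℝ) (v : EV d → ℝ) : Prop :=
  ∀ φ : EV d → ℝ, ContDiff ℝ 2 φ → ∀ x ∈ Ω,
    IsLocalMinOn (fun y => v y - φ y) Ω x → grad φ x ≠ 0 →
      0 ≤ F x (v x) (grad φ x) (hess φ x)

/-- Viscosity subsolution (all `C²` test functions). -/
def IsViscSubsolAll {d : ℕ} (Ω : Set (EV d))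
    (F : EV d → ℝ → EV d → Matrix (Fin d) (Fin d) ℝ → ℝ) (u : EV d → ℝ) : Prop :=
  ∀ φ : EV d → ℝ, ContDiff ℝ 2 φ → ∀ x ∈ Ω,
    IsLocalMaxOn (fun y => u y - φ y) Ω x →
      F x (u x) (grad φ x) (hess φ x) ≤ 0

/-- Viscosity supersolution (all `C²` test functions). -/
def IsViscSupersolAll {d : ℕ} (Ω : Set (EV d))
    (F : EV d → ℝ → EV d → Matrix (Fin d) (Fin d) ℝ → ℝ) (v : EV d → ℝ) : Prop :=
  ∀ φ : EV d → ℝ, ContDiff ℝ 2 φ → ∀ x ∈ Ω,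
    IsLocalMinOn (fun y => v y - φ y) Ω x →
      0 ≤ F x (v x) (grad φ x) (hess φ x)

/-- Locally Lipschitz on a set. -/
def LocLipschitzOn {α β : Type*} [PseudoMetricSpace α] [PseudoMetricSpace β]
    (f : α → β) (s : Set α) : Prop :=
  ∀ x ∈ s, ∃ K : NNReal, ∃ ε : ℝ, 0 < ε ∧ LipschitzOnWith K f (s ∩ Metric.ball x ε)

/-- Admissible controls: measurable, with `∑ i βᵢ(t)² ≤ 1`. -/
def Admissible {m : ℕ} (β : ℝ → Fin m → ℝ) : Prop :=
  (∀ i, Measurable fun t => β t i) ∧ ∀ t : ℝ, ∑ i, (β t i) ^ 2 ≤ 1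

/-- (Carathéodory) trajectory of the control system `y' = ∑ᵢ βᵢ Zᵢ(y)` on `[0, T]`. -/
def IsTrajOn {d m : ℕ} (Z : Fin m → EV d → EV d) (β : ℝ → Fin m → ℝ)
    (y : ℝ → EV d) (T : ℝ) : Prop :=
  ContinuousOn y (Icc 0 T) ∧
    ∀ t ∈ Icc 0 T, y t = y 0 + ∫ s in (0:ℝ)..t, ∑ i, β s i • Z i (y s)

/-- `x₁` is reachable from `x₀` by the control system, with trajectory staying in `Ω`. -/
def ReachableIn {d m : ℕ} (Ω : Set (EV d)) (Z : Fin m → EV d → EV d)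
    (x₀ x₁ : EV d) : Prop :=
  ∃ (β : ℝ → Fin m → ℝ) (y : ℝ → EV d) (T : ℝ), 0 ≤ T ∧ Admissible β ∧
    IsTrajOn Z β y T ∧ (∀ t ∈ Icc 0 T, y t ∈ Ω) ∧ y 0 = x₀ ∧ y T = x₁

/-- Bounded time controllability in `Ω`. -/
def BTC {d m : ℕ} (Ω : Set (EV d)) (Z : Fin m → EV d → EV d) : Prop :=
  ∀ x₀ ∈ Ω, ∀ x₁ ∈ Ω, ReachableIn Ω Z x₀ x₁

/-- Generalized exterior (Bony, proximal) normal `ν` to `K` at `z`. -/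
def IsExtNormal {d : ℕ} (K : Set (EV d)) (z ν : EV d) : Prop :=
  z ∈ frontier K ∧ ‖ν‖ = 1 ∧
    ∃ t : ℝ, 0 < t ∧ Metric.closedBall (z + t • ν) t ∩ closure K = {z}

/-- Lie bracket of two vector fields. -/
def vfBracket {d : ℕ} (X Y : EV d → EV d) : EV d → EV d :=
  fun x => fderiv ℝ Y x (X x) - fderiv ℝ X x (Y x)

/-- Vector fields obtained from `Z₁,…,Z_m` by iterated Lie brackets. -/
inductive LieGenerated {d m : ℕ} (Z : Fin m → EV d → EV d) : (EV d → EV d) → Prop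
  | base (i : Fin m) : LieGenerated Z (Z i)
  | bracket {X Y : EV d → EV d} :
      LieGenerated Z X → LieGenerated Z Y → LieGenerated Z (vfBracket X Y)

/-- Hörmander condition: the fields and their iterated brackets span `ℝ^d` at every point of `Ω`. -/
def Hormander {d m : ℕ} (Ω : Set (EV d)) (Z : Fin m → EV d → EV d) : Prop :=
  ∀ x ∈ Ω, Submodule.span ℝ {v : EV d | ∃ W, LieGenerated Z W ∧ W x = v} = ⊤

/-- Intrinsic (horizontal) gradient `σ(x)ᵀ p`. -/
def sigmaT {d m : ℕ} (σ : Fin m → EV d → EV d) (x : EV d) (p : EV d) : EV m :=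
  (EuclideanSpace.equiv (Fin m) ℝ).symm fun j => ∑ i, σ j x i * p i

/-- `σ(x)ᵀ X σ(x)` as an `m × m` matrix. -/
def sigmaHess {d m : ℕ} (σ : Fin m → EV d → EV d) (x : EV d)
    (X : Matrix (Fin d) (Fin d) ℝ) : Matrix (Fin m) (Fin m) ℝ :=
  Matrix.of fun j k => ∑ i, ∑ l, σ j x i * X i l * σ k x l

/-- First-order correction term `g(x,p)` of the symmetrized intrinsic Hessian. -/
def corrTerm {d m : ℕ} (σ : Fin m → EV d → EV d) (x : EV d) (p : EV d) :
    Matrix (Fin m) (Fin m) ℝ :=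
  Matrix.of fun j k =>
    ((∑ i, (fderiv ℝ (σ k) x (σ j x)) i * p i) +
      (∑ i, (fderiv ℝ (σ j) x (σ k x)) i * p i)) / 2

/-- Euclidean form `F(x,r,p,X) = G(x, r, σᵀp, σᵀXσ + g(x,p))` of a subelliptic operator. -/
def euclOp {d m : ℕ} (σ : Fin m → EV d → EV d)
    (G : EV d → ℝ → EV m → Matrix (Fin m) (Fin m) ℝ → ℝ) :
    EV d → ℝ → EV d → Matrix (Fin d) (Fin d) ℝ → ℝ :=
  fun x r p X => G x r (sigmaT σ x p) (sigmaHess σ x X + corrTerm σ x p)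

/-- `A ≥ Z ⊗ Z` in the quadratic-form sense: `ξᵀAξ ≥ (Z·ξ)²` for all `ξ`. -/
def matGEouter {d : ℕ} (A : Matrix (Fin d) (Fin d) ℝ) (Z : EV d) : Prop :=
  ∀ ξ : EV d, (dotp Z ξ) ^ 2 ≤ ∑ i, ∑ j, A i j * ξ i * ξ j


set_option maxHeartbeats 4000000

lemma dotp_eq_inner {d : ℕ} (p q : EV d) : dotp p q = inner ℝ p q := by
  simp [dotp, PiLp.inner_apply, RCLike.inner_apply, mul_comm]

lemma isExtNormal_of_nearest {d : ℕ} {K : Set (EV d)} {x z : EV d}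
    (hzK : z ∈ closure K) (hne : x ≠ z)
    (hnear : ∀ w ∈ closure K, dist x z ≤ dist x w) :
    IsExtNormal K z (‖x - z‖⁻¹ • (x - z)) := by
  set ρ := ‖x - z‖ with hρdef
  have hρpos : 0 < ρ := norm_pos_iff.mpr (sub_ne_zero.mpr hne)
  set ν := ρ⁻¹ • (x - z) with hνdef
  have hν1 : ‖ν‖ = 1 := by
    rw [hνdef, norm_smul, norm_inv, norm_norm, ← hρdef, inv_mul_cancel₀ hρpos.ne']
  have hρν : ρ • ν = x - z := smul_inv_smul₀ hρpos.ne' _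
  have hseg : ∀ t : ℝ, 0 < t → t < ρ → z + t • ν ∉ closure K := by
    intro t ht htρ hmem
    have h1 : dist x (z + t • ν) = ρ - t := by
      rw [dist_eq_norm]
      have : x - (z + t • ν) = (ρ - t) • ν := by
        rw [sub_smul, hρν]; abel
      rw [this, norm_smul, hν1, mul_one, Real.norm_eq_abs, abs_of_pos (by linarith)]
    have := hnear _ hmem
    rw [h1, dist_eq_norm, ← hρdef] at this
    linarith
  refine ⟨?_, hν1, ρ/2, by positivity, ?_⟩
  · rw [frontier_eq_closure_inter_closure]
    refine ⟨hzK, ?_⟩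
    have htend : Tendsto (fun t : ℝ => z + t • ν) (𝓝[>] 0) (𝓝 z) := by
      have : Tendsto (fun t : ℝ => z + t • ν) (𝓝 0) (𝓝 (z + (0:ℝ) • ν)) := by
        exact (tendsto_id.smul_const ν).const_add z
      simpa using this.mono_left nhdsWithin_le_nhds
    refine mem_closure_of_tendsto htend ?_
    filter_upwards [Ioo_mem_nhdsGT_of_mem
      (by constructor <;> [exact le_refl 0; exact hρpos] : (0:ℝ) ∈ Ico 0 ρ)] with t ht
    exact fun hK => hseg t ht.1 ht.2 (subset_closure hK)
  · ext w
    constructor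
    · rintro ⟨hwb, hwK⟩
      have hxz : x = z + ρ • ν := by rw [hρν]; abel
      set c := z + (ρ/2) • ν with hcdef
      have hcx : c - x = -((ρ/2) • ν) := by
        rw [hcdef, hxz]
        have : ρ • ν = (ρ/2) • ν + (ρ/2) • ν := by rw [← add_smul]; ring_nf
        rw [this]; abel
      have hcxnorm : ‖c - x‖ = ρ/2 := by
        rw [hcx, norm_neg, norm_smul, hν1, mul_one, Real.norm_eq_abs, abs_of_pos (by positivity)]
      have hwc : ‖w - c‖ ≤ ρ/2 := by
        have := mem_closedBall.mp hwb; rwa [dist_eq_norm] at this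
      have h1 : ρ ≤ ‖w - x‖ := by
        have := hnear w hwK
        rwa [dist_eq_norm, dist_eq_norm, ← hρdef, norm_sub_rev x w] at this
      have hexp : ‖w - x‖^2 = ‖w - c‖^2 + 2 * (inner ℝ (w - c) (c - x) : ℝ) + ‖c - x‖^2 := by
        have : w - x = (w - c) + (c - x) := by abel
        rw [this, norm_add_sq_real]
      have hCS : (inner ℝ (w - c) (c - x) : ℝ) ≤ ‖w - c‖ * ‖c - x‖ := real_inner_le_norm _ _
      have hlow : ρ^2/4 ≤ (inner ℝ (w - c) (c - x) : ℝ) := by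
        nlinarith [sq_nonneg (‖w - c‖), norm_nonneg (w - c)]
      have hwceq : ‖w - c‖ = ρ/2 := by nlinarith [norm_nonneg (w - c)]
      have hinner_eq : (inner ℝ (w - c) (c - x) : ℝ) = ‖w - c‖ * ‖c - x‖ := by
        rw [hwceq, hcxnorm]; nlinarith
      have := inner_eq_norm_mul_iff_real.mp hinner_eq
      rw [hwceq, hcxnorm] at this
      have hhalf : (ρ/2) ≠ 0 := by positivity
      have hwc_eq : w - c = c - x := smul_right_injective (EV d) hhalf this
      have : w = z := by
        have h2 : w = c + (c - x) := by rw [← hwc_eq]; abel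
        rw [h2, hcx, hcdef]; abel
      exact this
    · rintro hw
      rw [mem_singleton_iff] at hw
      rw [hw]
      refine ⟨?_, hzK⟩
      rw [mem_closedBall, dist_eq_norm]
      have : z - (z + (ρ/2) • ν) = -((ρ/2) • ν) := by abel
      rw [this, norm_neg, norm_smul, hν1, mul_one, Real.norm_eq_abs, abs_of_pos (by positivity)]

/-- Theorem 2.3, Bony-type invariance: if every generalized exterior normal
to a relatively closed set `K ⊆ Ω` is orthogonal to all the fields `Zᵢ`, then `K` is invariant
for the control system `y' = ∑ᵢ βᵢ Zᵢ(y)`. -/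
theorem invariance_of_relatively_closed_set {d m : ℕ} (Ω : Set (EV d)) (hΩ : IsOpen Ω)
    (Z : Fin m → EV d → EV d) (hZlip : ∀ i, LocLipschitzOn (Z i) (closure Ω))
    (K : Set (EV d)) (hKne : K.Nonempty) (hKΩ : K ⊆ Ω) (hKcl : closure K ∩ Ω ⊆ K)
    (hnormal : ∀ x ∈ Ω, ∀ ν : EV d, IsExtNormal K x ν → ∀ i, dotp (Z i x) ν = 0) :
    ∀ x ∈ K, ∀ β : ℝ → Fin m → ℝ, Admissible β → ∀ τ : ℝ, 0 < τ →
      ∀ y : ℝ → EV d, y 0 = x → ContinuousOn y (Ico 0 τ) →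
        (∀ t ∈ Ico 0 τ, y t ∈ Ω) →
        (∀ t ∈ Ico 0 τ, y t = y 0 + ∫ s in (0:ℝ)..t, ∑ i, β s i • Z i (y s)) →
        ∀ t ∈ Ico 0 τ, y t ∈ K := by
  intro x hxK β hβ τ hτ y hy0 hycont hyΩ hyeq t ht
  rcases Nat.eq_zero_or_pos m with hm | hm
  · subst hm
    have := hyeq t ht
    simp only [Finset.univ_eq_empty, Finset.sum_empty,
      intervalIntegral.integral_zero, add_zero] at this
    rw [this, hy0]; exact hxK
  haveI : Nonempty (Fin m) := Fin.pos_iff_nonempty.mp hm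
  set v : ℝ → EV d := fun s => ∑ i, β s i • Z i (y s) with hvdef
  have hβ1 : ∀ s i, |β s i| ≤ 1 := by
    intro s i
    have h1 : (β s i)^2 ≤ 1 :=
      le_trans (Finset.single_le_sum (f := fun j => (β s j)^2)
        (fun j _ => sq_nonneg _) (Finset.mem_univ i)) (hβ.2 s)
    exact (sq_le_one_iff_abs_le_one _).mp h1
  have hZcont : ∀ i, ContinuousOn (Z i) (closure Ω) := by
    intro i x' hx'
    obtain ⟨Ki, εi, hεi, hlip⟩ := hZlip i x' hx'
    exact (hlip.continuousOn.continuousWithinAt ⟨hx', mem_ball_self hεi⟩).mono_of_mem_nhdsWithin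
      (inter_mem_nhdsWithin _ (ball_mem_nhds _ hεi))
  have hvint : ∀ c ∈ Ico (0:ℝ) τ, IntervalIntegrable v MeasureTheory.volume 0 c := by
    intro c hc
    have hsub : Icc (0:ℝ) c ⊆ Ico 0 τ := fun s hs => ⟨hs.1, lt_of_le_of_lt hs.2 hc.2⟩
    have hyc : ContinuousOn y (Icc 0 c) := hycont.mono hsub
    have hZy : ∀ i, ContinuousOn (fun s => Z i (y s)) (Icc 0 c) := fun i =>
      (hZcont i).comp hyc (fun s hs => subset_closure (hyΩ s (hsub hs)))
    have hInt : MeasureTheory.IntegrableOn v (Icc 0 c) MeasureTheory.volume := by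
      apply MeasureTheory.integrable_finset_sum
      intro i _
      obtain ⟨Mi, hMi⟩ := isCompact_Icc.exists_bound_of_continuousOn (hZy i)
      have hMi0 : 0 ≤ Mi := le_trans (norm_nonneg _) (hMi 0 ⟨le_refl _, hc.1⟩)
      refine ⟨(((hβ.1 i).aestronglyMeasurable).restrict).smul
          ((hZy i).aestronglyMeasurable measurableSet_Icc),
        MeasureTheory.HasFiniteIntegral.restrict_of_bounded (C := Mi)
          isCompact_Icc.measure_lt_top ?_⟩
      filter_upwards [MeasureTheory.ae_restrict_mem measurableSet_Icc] with s hs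
      rw [norm_smul, Real.norm_eq_abs]
      calc |β s i| * ‖Z i (y s)‖ ≤ 1 * Mi :=
            mul_le_mul (hβ1 s i) (hMi s hs) (norm_nonneg _) zero_le_one
        _ = Mi := one_mul Mi
    have : MeasureTheory.IntegrableOn v (uIcc 0 c) MeasureTheory.volume := by
      rwa [uIcc_of_le hc.1]
    exact this.intervalIntegrable
  have hyd : ∀ a b : ℝ, 0 ≤ a → a ≤ b → b < τ → y b - y a = ∫ s in a..b, v s := by
    intro a b ha hab hb
    have hbI : b ∈ Ico (0:ℝ) τ := ⟨le_trans ha hab, hb⟩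
    have haI : a ∈ Ico (0:ℝ) τ := ⟨ha, lt_of_le_of_lt hab hb⟩
    have h1 := hyeq b hbI
    have h2 := hyeq a haI
    have hib := hvint b hbI
    have hia := hvint a haI
    rw [h1, h2]
    have := intervalIntegral.integral_interval_sub_left hib hia
    rw [← this]; abel
  by_contra hyt
  have ht0 : (0:ℝ) ≤ t := ht.1
  set A := {s : ℝ | s ∈ Icc 0 t ∧ y s ∈ K} with hAdef
  have hA0 : (0:ℝ) ∈ A := ⟨⟨le_refl _, ht0⟩, by rw [hy0]; exact hxK⟩
  have hIccIco : Icc (0:ℝ) t ⊆ Ico 0 τ := fun s hs => ⟨hs.1, lt_of_le_of_lt hs.2 ht.2⟩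
  have hAeq : A = Icc 0 t ∩ y ⁻¹' (closure K) := by
    ext s; constructor
    · rintro ⟨hs1, hs2⟩; exact ⟨hs1, subset_closure hs2⟩
    · rintro ⟨hs1, hs2⟩; exact ⟨hs1, hKcl ⟨hs2, hyΩ s (hIccIco hs1)⟩⟩
  have hAc : IsClosed A := by
    rw [hAeq]
    exact ContinuousOn.preimage_isClosed_of_isClosed (hycont.mono hIccIco)
      isClosed_Icc isClosed_closure
  have hAb : BddAbove A := ⟨t, fun s hs => hs.1.2⟩
  set T := sSup A with hTdef
  have hTA : T ∈ A := hAc.csSup_mem ⟨0, hA0⟩ hAb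
  have hT0 : 0 ≤ T := hTA.1.1
  have hTt : T < t := by
    rcases lt_or_eq_of_le hTA.1.2 with h | h
    · exact h
    · exact absurd (h ▸ hTA.2) hyt
  have hTτ : T < τ := lt_trans hTt ht.2
  -- local data at y T
  have hyTK : y T ∈ K := hTA.2
  have hyTΩ : y T ∈ Ω := hKΩ hyTK
  choose L ε hε hlip using fun i => hZlip i (y T) (subset_closure hyTΩ)
  set Lr : ℝ := ∑ i, (L i : ℝ) with hLrdef
  have hLr0 : 0 ≤ Lr := Finset.sum_nonneg fun i _ => (L i).coe_nonneg
  have hLi : ∀ i, (L i : ℝ) ≤ Lr := fun i =>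
    Finset.single_le_sum (f := fun j => ((L j : ℝ)))
      (fun j _ => (L j).coe_nonneg) (Finset.mem_univ i)
  set εm : ℝ := Finset.univ.inf' Finset.univ_nonempty ε with hεmdef
  have hεm0 : 0 < εm := (Finset.lt_inf'_iff _).mpr (fun i _ => hε i)
  have hεmi : ∀ i, εm ≤ ε i := fun i => Finset.inf'_le _ (Finset.mem_univ i)
  obtain ⟨r₁, hr₁0, hr₁⟩ := Metric.isOpen_iff.mp hΩ (y T) hyTΩ
  set r : ℝ := (min εm r₁)/2 with hrdef
  have hr0 : 0 < r := by
    rw [hrdef]; have := lt_min hεm0 hr₁0; linarith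
  have h2rε : 2*r ≤ εm := by
    rw [hrdef]; have := min_le_left εm r₁; linarith
  have h2r1 : 2*r ≤ r₁ := by
    rw [hrdef]; have := min_le_right εm r₁; linarith
  have hballΩ : ball (y T) (2*r) ⊆ Ω :=
    fun w hw => hr₁ (mem_ball.mpr (lt_of_lt_of_le (mem_ball.mp hw) h2r1))
  have hlip2 : ∀ i, ∀ w ∈ closure Ω ∩ ball (y T) (2*r), ∀ w' ∈ closure Ω ∩ ball (y T) (2*r),
      dist (Z i w) (Z i w') ≤ Lr * dist w w' := by
    intro i w hw w' hw'
    have hsub : closure Ω ∩ ball (y T) (2*r) ⊆ closure Ω ∩ ball (y T) (ε i) :=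
      inter_subset_inter_right _ (ball_subset_ball (le_trans h2rε (hεmi i)))
    calc dist (Z i w) (Z i w') ≤ (L i) * dist w w' :=
          (hlip i).dist_le_mul w (hsub hw) w' (hsub hw')
      _ ≤ Lr * dist w w' := mul_le_mul_of_nonneg_right (hLi i) dist_nonneg
  set M : ℝ := (∑ i, ‖Z i (y T)‖) + Lr * (2*r) with hMdef
  have hyTmem : y T ∈ closure Ω ∩ ball (y T) (2*r) :=
    ⟨subset_closure hyTΩ, mem_ball_self (by linarith)⟩
  have hZbound : ∀ i, ∀ w ∈ closure Ω ∩ ball (y T) (2*r), ‖Z i w‖ ≤ M := by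
    intro i w hw
    have h1 : dist (Z i w) (Z i (y T)) ≤ Lr * dist w (y T) := hlip2 i w hw (y T) hyTmem
    have h2 : ‖Z i (y T)‖ ≤ ∑ j, ‖Z j (y T)‖ :=
      Finset.single_le_sum (f := fun j => ‖Z j (y T)‖)
        (fun j _ => norm_nonneg _) (Finset.mem_univ i)
    have h3 : dist w (y T) ≤ 2*r := le_of_lt (mem_ball.mp hw.2)
    have h4 : ‖Z i w‖ - ‖Z i (y T)‖ ≤ ‖Z i w - Z i (y T)‖ := norm_sub_norm_le _ _
    rw [dist_eq_norm] at h1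
    have h5 : Lr * dist w (y T) ≤ Lr * (2*r) := mul_le_mul_of_nonneg_left h3 hLr0
    rw [hMdef]
    linarith
  have hM0 : 0 ≤ M := le_trans (norm_nonneg _) (hZbound ⟨0, hm⟩ (y T) hyTmem)
  set Cb : ℝ := m * M with hCbdef
  have hCb0 : 0 ≤ Cb := mul_nonneg (Nat.cast_nonneg m) hM0
  -- choose b
  have hcontT : ContinuousWithinAt y (Ico 0 τ) T := hycont T ⟨hT0, hTτ⟩
  have hballmem : y ⁻¹' (ball (y T) r) ∈ 𝓝[Ico 0 τ] T := hcontT (ball_mem_nhds _ hr0)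
  obtain ⟨δ, hδ0, hδ⟩ := Metric.mem_nhdsWithin_iff.mp hballmem
  set b : ℝ := min (T + δ/2) t with hbdef
  have hTb : T < b := lt_min (by linarith) hTt
  have hbt : b ≤ t := min_le_right _ _
  have hbτ : b < τ := lt_of_le_of_lt hbt ht.2
  have hIccb : ∀ s ∈ Icc T b, s ∈ Ico 0 τ := fun s hs =>
    ⟨le_trans hT0 hs.1, lt_of_le_of_lt (le_trans hs.2 hbt) ht.2⟩
  have hyball : ∀ s ∈ Icc T b, y s ∈ ball (y T) r := by
    intro s hs
    apply hδ
    refine ⟨?_, hIccb s hs⟩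
    rw [mem_ball, Real.dist_eq, abs_of_nonneg (by linarith [hs.1])]
    have : s ≤ T + δ/2 := le_trans hs.2 (min_le_left _ _)
    linarith
  -- squared distance function
  set g : ℝ → ℝ := fun s => (infDist (y s) K)^2 with hgdef
  have hKclne : (closure K).Nonempty := hKne.closure
  have hnear : ∀ s ∈ Icc T b, ∃ z ∈ closure K, infDist (y s) K = dist (y s) z ∧ z ∈ Ω ∧
      z ∈ ball (y T) (2*r) ∧ dist (y s) z < r ∧ (∀ w ∈ closure K, dist (y s) z ≤ dist (y s) w) := by
    intro s hs
    obtain ⟨z, hz1, hz2⟩ := isClosed_closure.exists_infDist_eq_dist hKclne (y s)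
    have hinf : infDist (y s) K = dist (y s) z := by rw [← Metric.infDist_closure]; exact hz2
    have hdy : dist (y s) z < r := by
      rw [← hinf]
      exact lt_of_le_of_lt (infDist_le_dist_of_mem hyTK) (mem_ball.mp (hyball s hs))
    have hzball : z ∈ ball (y T) (2*r) := by
      have h5 : dist z (y T) ≤ dist z (y s) + dist (y s) (y T) := dist_triangle _ _ _
      have h6 : dist (y s) (y T) < r := mem_ball.mp (hyball s hs)
      rw [dist_comm] at hdy
      rw [mem_ball]
      linarith
    exact ⟨z, hz1, hinf, hballΩ hzball, hzball, hdy,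
      fun w hw => by rw [← hinf, ← Metric.infDist_closure]; exact infDist_le_dist_of_mem hw⟩
  set Ac : ℝ := 2 * m * Lr with hAcdef
  set C₂ : ℝ := 2 * m * Lr * r * Cb + Cb^2 with hC₂def
  -- bound on the velocity
  have hvb : ∀ s ∈ Icc T b, ‖v s‖ ≤ Cb := by
    intro s hs
    have hys : y s ∈ closure Ω ∩ ball (y T) (2*r) :=
      ⟨subset_closure (hyΩ s (hIccb s hs)), ball_subset_ball (by linarith) (hyball s hs)⟩
    calc ‖v s‖ ≤ ∑ i, ‖β s i • Z i (y s)‖ := norm_sum_le _ _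
      _ ≤ ∑ _i : Fin m, M := Finset.sum_le_sum (fun i _ => by
          rw [norm_smul, Real.norm_eq_abs]
          calc |β s i| * ‖Z i (y s)‖ ≤ 1 * M :=
                mul_le_mul (hβ1 s i) (hZbound i (y s) hys) (norm_nonneg _) zero_le_one
            _ = M := one_mul M)
      _ = Cb := by
          rw [Finset.sum_const, Finset.card_univ, Fintype.card_fin, nsmul_eq_mul, hCbdef]
  have hdisp : ∀ a' u : ℝ, T ≤ a' → a' ≤ u → u ≤ b → ‖y u - y a'‖ ≤ Cb * (u - a') := by
    intro a' u ha' hau hub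
    rw [hyd a' u (le_trans hT0 ha') hau (lt_of_le_of_lt hub hbτ)]
    have h0 := intervalIntegral.norm_integral_le_of_norm_le_const (C := Cb) (f := v)
      (a := a') (b := u) ?_
    · rwa [abs_of_nonneg (by linarith)] at h0
    · intro σ hσ
      rw [Set.uIoc_of_le hau] at hσ
      exact hvb σ ⟨le_trans ha' (le_of_lt hσ.1), le_trans hσ.2 hub⟩
  -- key differential inequality
  have key : ∀ s ∈ Ico T b, ∀ u ∈ Ioc s b, g u - g s ≤ (u - s) * (Ac * g s + C₂ * (u - s)) := by
    intro s hs u hu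
    have hsIcc : s ∈ Icc T b := ⟨hs.1, le_of_lt hs.2⟩
    have huIcc : u ∈ Icc T b := ⟨le_trans hs.1 (le_of_lt hu.1), hu.2⟩
    obtain ⟨z, hzcl, hinf, hzΩ, hzball, hρr, hznear⟩ := hnear s hsIcc
    set ρ : ℝ := dist (y s) z with hρdef
    have hρ0 : 0 ≤ ρ := dist_nonneg
    set w : EV d := y s - z with hwdef
    have hwnorm : ‖w‖ = ρ := by rw [hwdef, hρdef, dist_eq_norm]
    have hgs : g s = ρ^2 := by rw [hgdef]; simp only; rw [hinf]
    have hs0 : (0:ℝ) ≤ s := le_trans hT0 hs.1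
    have huτ : u < τ := lt_of_le_of_lt hu.2 hbτ
    have hvint_su : IntervalIntegrable v MeasureTheory.volume s u := by
      apply (hvint u ⟨le_trans hs0 (le_of_lt hu.1), huτ⟩).mono_set
      rw [Set.uIcc_of_le (le_of_lt hu.1), Set.uIcc_of_le (le_trans hs0 (le_of_lt hu.1))]
      exact Icc_subset_Icc hs0 le_rfl
    have hq : y u - y s = ∫ σ in s..u, v σ :=
      hyd s u hs0 (le_of_lt hu.1) huτ
    -- pointwise bound on the inner ℝ product
    have hptw : ∀ σ ∈ Icc s u, (inner ℝ w (v σ) : ℝ) ≤ m * (Lr * (ρ * (ρ + Cb * (u - s)))) := by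
      intro σ hσ
      have hσIcc : σ ∈ Icc T b := ⟨le_trans hs.1 hσ.1, le_trans hσ.2 hu.2⟩
      have hyσ : y σ ∈ closure Ω ∩ ball (y T) (2*r) :=
        ⟨subset_closure (hyΩ σ (hIccb σ hσIcc)), ball_subset_ball (by linarith) (hyball σ hσIcc)⟩
      have hterm : ∀ i, β σ i * (inner ℝ w (Z i (y σ)) : ℝ) ≤ Lr * (ρ * (ρ + Cb * (u - s))) := by
        intro i
        rcases eq_or_ne (y s) z with hys | hys
        · have hw0 : w = 0 := by rw [hwdef, hys, sub_self]
          have hρz : ρ = 0 := by rw [hρdef, hys, dist_self]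
          rw [hw0, inner_zero_left, mul_zero, hρz]
          simp
        · have hν := isExtNormal_of_nearest hzcl hys hznear
          have h0 : (inner ℝ w (Z i z) : ℝ) = 0 := by
            have h1 := hnormal z hzΩ _ hν i
            rw [dotp_eq_inner] at h1
            rw [real_inner_smul_right] at h1
            have hne0 : ‖y s - z‖ ≠ 0 := norm_ne_zero_iff.mpr (sub_ne_zero.mpr hys)
            have h2 : (inner ℝ (Z i z) (y s - z) : ℝ) = 0 :=
              (mul_eq_zero.mp h1).resolve_left (inv_ne_zero hne0)
            rw [hwdef, real_inner_comm]
            exact h2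
          have hZdiff : ‖Z i (y σ) - Z i z‖ ≤ Lr * (ρ + Cb * (u - s)) := by
            have hd := hlip2 i (y σ) hyσ z ⟨subset_closure hzΩ, hzball⟩
            have hdz : dist (y σ) z ≤ ρ + Cb * (u - s) := by
              have h4 : dist (y σ) (y s) ≤ Cb * (σ - s) := by
                rw [dist_eq_norm]; exact hdisp s σ hs.1 hσ.1 (le_trans hσ.2 hu.2)
              have h5 : dist (y σ) z ≤ dist (y σ) (y s) + dist (y s) z := dist_triangle _ _ _
              have h6 : Cb * (σ - s) ≤ Cb * (u - s) :=
                mul_le_mul_of_nonneg_left (by linarith [hσ.2]) hCb0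
              rw [← hρdef] at h5
              linarith
            rw [dist_eq_norm] at hd
            exact le_trans hd (mul_le_mul_of_nonneg_left hdz hLr0)
          have hsplit : (inner ℝ w (Z i (y σ)) : ℝ) = inner ℝ w (Z i (y σ) - Z i z) := by
            rw [inner_sub_right, h0, sub_zero]
          calc β σ i * (inner ℝ w (Z i (y σ)) : ℝ)
              = β σ i * inner ℝ w (Z i (y σ) - Z i z) := by rw [hsplit]
            _ ≤ |β σ i * (inner ℝ w (Z i (y σ) - Z i z) : ℝ)| := le_abs_self _
            _ = |β σ i| * |(inner ℝ w (Z i (y σ) - Z i z) : ℝ)| := abs_mul _ _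
            _ ≤ 1 * (‖w‖ * ‖Z i (y σ) - Z i z‖) :=
                mul_le_mul (hβ1 σ i) (abs_real_inner_le_norm _ _) (abs_nonneg _) zero_le_one
            _ = ρ * ‖Z i (y σ) - Z i z‖ := by rw [one_mul, hwnorm]
            _ ≤ ρ * (Lr * (ρ + Cb * (u - s))) := mul_le_mul_of_nonneg_left hZdiff hρ0
            _ = Lr * (ρ * (ρ + Cb * (u - s))) := by ring
      have hsum : (inner ℝ w (v σ) : ℝ) = ∑ i, β σ i * (inner ℝ w (Z i (y σ)) : ℝ) := by
        rw [hvdef]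
        simp only [inner_sum, real_inner_smul_right]
      rw [hsum]
      calc ∑ i, β σ i * (inner ℝ w (Z i (y σ)) : ℝ)
          ≤ ∑ _i : Fin m, Lr * (ρ * (ρ + Cb * (u - s))) :=
            Finset.sum_le_sum (fun i _ => hterm i)
        _ = m * (Lr * (ρ * (ρ + Cb * (u - s)))) := by
            rw [Finset.sum_const, Finset.card_univ, Fintype.card_fin, nsmul_eq_mul]
    have hinner_int : IntervalIntegrable (fun σ => (inner ℝ w (v σ) : ℝ))
        MeasureTheory.volume s u :=
      ⟨(innerSL ℝ w).integrable_comp hvint_su.1, (innerSL ℝ w).integrable_comp hvint_su.2⟩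
    have hinner_eq : (inner ℝ w (y u - y s) : ℝ) = ∫ σ in s..u, (inner ℝ w (v σ) : ℝ) := by
      rw [hq]
      have h7 := (innerSL ℝ w).intervalIntegral_comp_comm hvint_su
      simpa only [innerSL_apply_apply] using h7.symm
    have hinner_le : (inner ℝ w (y u - y s) : ℝ)
        ≤ (u - s) * (m * (Lr * (ρ * (ρ + Cb * (u - s))))) := by
      rw [hinner_eq]
      have h7 := intervalIntegral.integral_mono_on (le_of_lt hu.1) hinner_int
        (intervalIntegrable_const (c := (m : ℝ) * (Lr * (ρ * (ρ + Cb * (u - s)))))) hptw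
      rwa [intervalIntegral.integral_const, smul_eq_mul] at h7
    have hgu : g u ≤ ‖(y u - y s) + w‖^2 := by
      have h7 : y u - z = (y u - y s) + w := by rw [hwdef]; abel
      have h8 : infDist (y u) K ≤ dist (y u) z := by
        rw [← Metric.infDist_closure]; exact infDist_le_dist_of_mem hzcl
      rw [hgdef]
      simp only
      calc (infDist (y u) K)^2 ≤ (dist (y u) z)^2 := pow_le_pow_left₀ infDist_nonneg h8 2
        _ = ‖(y u - y s) + w‖^2 := by rw [dist_eq_norm, h7]
    have hexp : ‖(y u - y s) + w‖^2
        = ‖y u - y s‖^2 + 2*(inner ℝ (y u - y s) w : ℝ) + ‖w‖^2 := norm_add_sq_real _ _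
    have hqn : ‖y u - y s‖ ≤ Cb * (u - s) := hdisp s u hs.1 (le_of_lt hu.1) hu.2
    have hqn2 : ‖y u - y s‖^2 ≤ (Cb * (u - s))^2 := pow_le_pow_left₀ (norm_nonneg _) hqn 2
    have hcomm : (inner ℝ (y u - y s) w : ℝ) = inner ℝ w (y u - y s) := real_inner_comm _ _
    have hus : 0 < u - s := sub_pos.mpr hu.1
    have hint2 : (m:ℝ)*Lr*Cb*(u-s)^2*ρ ≤ (m:ℝ)*Lr*Cb*(u-s)^2*r :=
      mul_le_mul_of_nonneg_left (le_of_lt hρr)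
        (mul_nonneg (mul_nonneg (mul_nonneg (Nat.cast_nonneg m) hLr0) hCb0) (sq_nonneg _))
    have hstep : g u - g s
        ≤ (Cb*(u-s))^2 + 2*((u - s) * (m * (Lr * (ρ * (ρ + Cb * (u - s)))))) := by
      have e1 : (inner ℝ (y u - y s) w : ℝ) ≤ (u - s) * (m * (Lr * (ρ * (ρ + Cb * (u - s))))) := by
        rw [hcomm]; exact hinner_le
      have e3 := hgu
      rw [hexp, hwnorm] at e3
      generalize hX : (inner ℝ (y u - y s) w : ℝ) = I1 at e1 e3
      generalize hY : ‖y u - y s‖ = a1 at e3 hqn2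
      rw [hgs]
      linarith
    have hpoly : (Cb*(u-s))^2 + 2*((u - s) * (m * (Lr * (ρ * (ρ + Cb * (u - s))))))
        ≤ (u - s) * (2*m*Lr * ρ^2 + (2*m*Lr*r*Cb + Cb^2) * (u - s)) := by
      have h9 : (u - s) * (2*m*Lr * ρ^2 + (2*m*Lr*r*Cb + Cb^2) * (u - s))
          - ((Cb*(u-s))^2 + 2*((u - s) * (m * (Lr * (ρ * (ρ + Cb * (u - s)))))))
          = 2*((m:ℝ)*Lr*Cb*(u-s)^2*r - (m:ℝ)*Lr*Cb*(u-s)^2*ρ) := by ring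
      have h10 : 0 ≤ 2*((m:ℝ)*Lr*Cb*(u-s)^2*r - (m:ℝ)*Lr*Cb*(u-s)^2*ρ) := by
        linarith [hint2]
      linarith [h9, h10]
    rw [hAcdef, hC₂def, hgs]
    have hstep2 := hstep
    rw [hgs] at hstep2
    linarith
  -- Grönwall
  have hgcont : ContinuousOn g (Icc T b) := by
    apply ContinuousOn.pow
    exact (continuous_infDist_pt K).comp_continuousOn (hycont.mono (fun s hs => hIccb s hs))
  have hslope : ∀ s ∈ Ico T b, ∀ rr : ℝ, Ac * g s < rr →
      ∃ᶠ u in 𝓝[>] s, (u - s)⁻¹ * (g u - g s) < rr := by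
    intro s hs rr hrr
    have hev : ∀ᶠ u in 𝓝[>] s, (u - s)⁻¹ * (g u - g s) < rr := by
      have h1 : Ioc s b ∈ 𝓝[>] s := Ioc_mem_nhdsGT hs.2
      have h2 : ∀ᶠ u in 𝓝[>] s, C₂ * (u - s) < rr - Ac * g s := by
        have hc : Tendsto (fun u : ℝ => C₂ * (u - s)) (𝓝[>] s) (𝓝 0) := by
          have h3 : Tendsto (fun u : ℝ => C₂ * (u - s)) (𝓝 s) (𝓝 (C₂ * (s - s))) :=
            ((tendsto_id.sub_const s).const_mul C₂)
          simpa using h3.mono_left nhdsWithin_le_nhds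
        exact hc.eventually_lt_const (by linarith)
      filter_upwards [h1, h2] with u hu1 hu2
      have hus : 0 < u - s := sub_pos.mpr hu1.1
      have h4 := key s hs u hu1
      have h5 : (u - s)⁻¹ * (g u - g s) ≤ Ac * g s + C₂ * (u - s) := by
        rw [inv_mul_le_iff₀ hus]
        linarith only [h4]
      have h6 : Ac * g s + C₂ * (u - s) < rr := by linarith only [hu2]
      exact lt_of_le_of_lt h5 h6
    exact hev.frequently
  have hgron := le_gronwallBound_of_liminf_deriv_right_le (f := g)
    (f' := fun s => Ac * g s) (δ := 0) (K := Ac) (ε := 0) hgcont hslope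
    (by rw [hgdef]; simp only; rw [infDist_zero_of_mem hyTK]; norm_num)
    (fun s _ => by simp)
  have hgb : g b ≤ 0 := by
    have h6 := hgron b ⟨le_of_lt hTb, le_refl b⟩
    rwa [gronwallBound_ε0_δ0] at h6
  have hgb0 : infDist (y b) K = 0 := by
    rw [hgdef] at hgb
    simp only at hgb
    have h1 : infDist (y b) K ^ 2 = 0 := le_antisymm hgb (sq_nonneg _)
    exact pow_eq_zero_iff two_ne_zero |>.mp h1
  have hybK : y b ∈ K := by
    have h1 : y b ∈ closure K := (mem_closure_iff_infDist_zero hKne).mpr hgb0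
    exact hKcl ⟨h1, hyΩ b (hIccb b ⟨le_of_lt hTb, le_refl b⟩)⟩
  have hbA : b ∈ A := ⟨⟨le_trans hT0 (le_of_lt hTb), hbt⟩, hybK⟩
  have : b ≤ T := le_csSup hAb hbA
  linarith
end
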